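/- Let G be a finite simple graph with surplus(G) ≥ 1, and let Z be a nonempty independent set of G with |N(Z)| = |Z| + 1 such that N(Z) is also an independent set of G. Let G' be the struction graph obtained from G and Z. Then LP(G') ≥ LP(G) − |Z|. -/

import Mathlib

open scoped Classical

/-- A fractional vertex cover of `G`. -/
def IsFVC {V : Type} (G : SimpleGraph V) (x : V → ℝ) : Prop :=
  (∀ v, 0 ≤ x v ∧ x v ≤ 1) ∧ ∀ ⦃u v⦄, G.Adj u v → 1 ≤ x u + x v

/-- The weight of a fractional vertex cover. -/
noncomputable def fvcWeight {V : Type} [Fintype V] (x : V → ℝ) : ℝ := ∑ v, x v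

/-- `LP(G)`: the minimum weight of a fractional vertex cover of `G`. -/
noncomputable def LPopt {V : Type} [Fintype V] (G : SimpleGraph V) : ℝ :=
  sInf {w : ℝ | ∃ x : V → ℝ, IsFVC G x ∧ w = fvcWeight x}

/-- A matching of `G`: a set of pairwise vertex-disjoint edges of `G`. -/
def IsMatchingSet {V : Type} (G : SimpleGraph V) (M : Finset (Sym2 V)) : Prop :=
  (∀ e ∈ M, e ∈ G.edgeSet) ∧ ∀ e ∈ M, ∀ f ∈ M, e ≠ f → ∀ v : V, v ∈ e → v ∉ f

/-- `MM(G)`: the maximum size of a matching of `G`. -/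
noncomputable def MMnum {V : Type} (G : SimpleGraph V) : ℕ :=
  sSup {n : ℕ | ∃ M : Finset (Sym2 V), IsMatchingSet G M ∧ M.card = n}

/-- `OPT(G)`: the minimum size of a vertex cover of `G`. -/
noncomputable def VCnum {V : Type} (G : SimpleGraph V) : ℕ :=
  sInf {n : ℕ | ∃ S : Finset V, (∀ ⦃u v⦄, G.Adj u v → u ∈ S ∨ v ∈ S) ∧ S.card = n}

/-- `N(X)`: the set of vertices outside `X` having a neighbour in `X`. -/
def nbhd {V : Type} (G : SimpleGraph V) (X : Set V) : Set V :=
  {v | v ∉ X ∧ ∃ u ∈ X, G.Adj u v}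

/-- `X` is an independent set in `G`. -/
def IndepSet {V : Type} (G : SimpleGraph V) (X : Set V) : Prop :=
  ∀ u ∈ X, ∀ v ∈ X, ¬ G.Adj u v

/-- `surplus(G) ≥ s`: every nonempty independent set `X` satisfies `|N(X)| ≥ |X| + s`. -/
def SurplusGE {V : Type} (G : SimpleGraph V) (s : ℕ) : Prop :=
  ∀ X : Set V, X.Nonempty → IndepSet G X → X.ncard + s ≤ (nbhd G X).ncard

/-- The matching `M` saturates the vertex `v`. -/
def Saturates {V : Type} (M : Finset (Sym2 V)) (v : V) : Prop := ∃ e ∈ M, v ∈ e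

/-- `O(G)`: vertices left unsaturated by some maximum matching of `G`. -/
def OSet {V : Type} (G : SimpleGraph V) : Set V :=
  {v | ∃ M : Finset (Sym2 V), IsMatchingSet G M ∧ M.card = MMnum G ∧ ¬ Saturates M v}

/-- `I(G)`: vertices outside `O(G)` having a neighbour in `O(G)`. -/
def ISet {V : Type} (G : SimpleGraph V) : Set V := nbhd G (OSet G)

/-- `P(G)`: the remaining vertices. -/
def GEPSet {V : Type} (G : SimpleGraph V) : Set V := (OSet G ∪ ISet G)ᶜ

/-- The struction graph obtained from `G` and `Z`: delete `Z`, identify `N(Z)`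
into a single new vertex `z` adjacent to exactly those remaining vertices that are
adjacent in `G` to some vertex of `N(Z)`. -/
def struction {V : Type} (G : SimpleGraph V) (Z : Set V) :
    SimpleGraph (((Z ∪ nbhd G Z)ᶜ : Set V) ⊕ Unit) where
  Adj a b :=
    match a, b with
    | Sum.inl u, Sum.inl v => G.Adj u.1 v.1
    | Sum.inl u, Sum.inr _ => ∃ w ∈ nbhd G Z, G.Adj w u.1
    | Sum.inr _, Sum.inl v => ∃ w ∈ nbhd G Z, G.Adj w v.1
    | Sum.inr _, Sum.inr _ => False
  symm := by
    refine ⟨?_⟩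
    rintro (u | u) (v | v) h
    · exact h.symm
    · exact h
    · exact h
    · exact h
  loopless := by
    refine ⟨?_⟩
    rintro (u | u) h
    · exact G.loopless.irrefl u.1 h
    · exact h

/-- Struction does not drop `LP` by more than `|Z|`. -/
theorem lp_struction_ge {V : Type} [Fintype V] (G : SimpleGraph V)
    (hsur : SurplusGE G 1) (Z : Set V) (hZne : Z.Nonempty) (hZind : IndepSet G Z)
    (hZsur : (nbhd G Z).ncard = Z.ncard + 1) (hNind : IndepSet G (nbhd G Z)) :
    LPopt G - (Z.ncard : ℝ) ≤ LPopt (struction G Z) := by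
  classical
  have hne : {w : ℝ | ∃ x, IsFVC (struction G Z) x ∧ w = fvcWeight x}.Nonempty := by
    exact ⟨fvcWeight (fun _ => (1:ℝ)), fun _ => 1,
      ⟨fun v => ⟨zero_le_one, le_refl 1⟩, fun u v _ => by norm_num⟩, rfl⟩
  refine le_csInf hne ?_
  rintro w ⟨x', hx', rfl⟩
  rw [sub_le_iff_le_add]
  set t := x' (Sum.inr ()) with ht
  have ht0 : (0:ℝ) ≤ t := (hx'.1 _).1
  have ht1 : t ≤ 1 := (hx'.1 _).2
  set x : V → ℝ := fun v =>
    if h : v ∈ ((Z ∪ nbhd G Z)ᶜ : Set V) then x' (Sum.inl ⟨v, h⟩)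
    else if v ∈ Z then 1 - t else t with hxdef
  have hmemZ : ∀ v ∈ Z, x v = 1 - t := by
    intro v hv
    have : v ∉ ((Z ∪ nbhd G Z)ᶜ : Set V) := fun h => h (Or.inl hv)
    simp [hxdef, this, hv]
  have hmemN : ∀ v ∈ nbhd G Z, x v = t := by
    intro v hv
    have h1 : v ∉ ((Z ∪ nbhd G Z)ᶜ : Set V) := fun h => h (Or.inr hv)
    have h2 : v ∉ Z := hv.1
    simp only [hxdef]
    rw [dif_neg h1, if_neg h2]
  have hmemC : ∀ (v : V) (h : v ∈ ((Z ∪ nbhd G Z)ᶜ : Set V)),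
      x v = x' (Sum.inl ⟨v, h⟩) := by
    intro v h
    simp only [hxdef]
    exact dif_pos h
  have hxFVC : IsFVC G x := by
    constructor
    · intro v
      by_cases h : v ∈ ((Z ∪ nbhd G Z)ᶜ : Set V)
      · rw [hmemC v h]; exact hx'.1 _
      · by_cases hz : v ∈ Z
        · rw [hmemZ v hz]; constructor <;> linarith
        · have hn : v ∈ nbhd G Z := by
            rcases not_not.mp (fun hc => h hc) with hv | hv
            · exact absurd hv hz
            · exact hv
          rw [hmemN v hn]; exact ⟨ht0, ht1⟩
    · intro u v huv
      -- classify u and v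
      have key : ∀ a b : V, G.Adj a b → a ∈ Z → b ∈ nbhd G Z := by
        intro a b hab ha
        by_cases hbz : b ∈ Z
        · exact absurd hab (hZind a ha b hbz)
        · exact ⟨hbz, a, ha, hab⟩
      by_cases hu : u ∈ Z
      · have hv : v ∈ nbhd G Z := key u v huv hu
        rw [hmemZ u hu, hmemN v hv]; linarith
      · by_cases hv : v ∈ Z
        · have hu' : u ∈ nbhd G Z := key v u huv.symm hv
          rw [hmemN u hu', hmemZ v hv]; linarith
        · -- neither in Z
          by_cases hun : u ∈ nbhd G Z
          · by_cases hvn : v ∈ nbhd G Z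
            · exact absurd huv (hNind u hun v hvn)
            · have hvc : v ∈ ((Z ∪ nbhd G Z)ᶜ : Set V) := by
                intro hc; rcases hc with hc | hc
                · exact hv hc
                · exact hvn hc
              have hadj : (struction G Z).Adj (Sum.inr ()) (Sum.inl ⟨v, hvc⟩) :=
                ⟨u, hun, huv⟩
              have := hx'.2 hadj
              rw [hmemN u hun, hmemC v hvc]; linarith
          · have huc : u ∈ ((Z ∪ nbhd G Z)ᶜ : Set V) := by
              intro hc; rcases hc with hc | hc
              · exact hu hc
              · exact hun hc
            by_cases hvn : v ∈ nbhd G Z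
            · have hadj : (struction G Z).Adj (Sum.inr ()) (Sum.inl ⟨u, huc⟩) :=
                ⟨v, hvn, huv.symm⟩
              have := hx'.2 hadj
              rw [hmemC u huc, hmemN v hvn]; linarith
            · have hvc : v ∈ ((Z ∪ nbhd G Z)ᶜ : Set V) := by
                intro hc; rcases hc with hc | hc
                · exact hv hc
                · exact hvn hc
              have hadj : (struction G Z).Adj (Sum.inl ⟨u, huc⟩) (Sum.inl ⟨v, hvc⟩) :=
                huv
              have := hx'.2 hadj
              rw [hmemC u huc, hmemC v hvc]; linarith
  -- weight computation
  have hdisj : ∀ v ∈ nbhd G Z, v ∉ Z := fun v hv => hv.1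
  have hweight : fvcWeight x = fvcWeight x' + (Z.ncard : ℝ) := by
    have hsplit1 := Finset.sum_filter_add_sum_filter_not Finset.univ
      (fun v => v ∈ (Z ∪ nbhd G Z : Set V)) x
    have hsplit2 := Finset.sum_filter_add_sum_filter_not
      (Finset.univ.filter (fun v => v ∈ (Z ∪ nbhd G Z : Set V)))
      (fun v => v ∈ Z) x
    have hZf : (Finset.univ.filter (fun v => v ∈ (Z ∪ nbhd G Z : Set V))).filter
        (fun v => v ∈ Z) = Finset.univ.filter (fun v => v ∈ Z) := by
      ext v; simp only [Finset.mem_filter, Finset.mem_univ, true_and]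
      exact ⟨fun h => h.2, fun h => ⟨Or.inl h, h⟩⟩
    have hNf : (Finset.univ.filter (fun v => v ∈ (Z ∪ nbhd G Z : Set V))).filter
        (fun v => ¬ v ∈ Z) = Finset.univ.filter (fun v => v ∈ nbhd G Z) := by
      ext v; simp only [Finset.mem_filter, Finset.mem_univ, true_and]
      constructor
      · rintro ⟨h1 | h1, h2⟩
        · exact absurd h1 h2
        · exact h1
      · intro h; exact ⟨Or.inr h, h.1⟩
    have hsumZ : ∑ v ∈ Finset.univ.filter (fun v => v ∈ Z), x v
        = (Z.ncard : ℝ) * (1 - t) := by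
      rw [Finset.sum_congr rfl (fun v hv => hmemZ v (Finset.mem_filter.mp hv).2),
        Finset.sum_const, nsmul_eq_mul]
      have hc : Finset.univ.filter (fun v => v ∈ Z) = Z.toFinset := by
        ext v; simp [Set.mem_toFinset]
      rw [hc, ← Set.ncard_eq_toFinset_card']
    have hsumN : ∑ v ∈ Finset.univ.filter (fun v => v ∈ nbhd G Z), x v
        = ((Z.ncard : ℝ) + 1) * t := by
      rw [Finset.sum_congr rfl (fun v hv => hmemN v (Finset.mem_filter.mp hv).2),
        Finset.sum_const, nsmul_eq_mul]
      have hc : Finset.univ.filter (fun v => v ∈ nbhd G Z) = (nbhd G Z).toFinset := by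
        ext v; simp [Set.mem_toFinset]
      rw [hc, ← Set.ncard_eq_toFinset_card', hZsur]
      push_cast; ring
    have hsumC : ∑ v ∈ Finset.univ.filter
        (fun v => ¬ v ∈ (Z ∪ nbhd G Z : Set V)), x v
        = ∑ u : ((Z ∪ nbhd G Z)ᶜ : Set V), x' (Sum.inl u) := by
      rw [Finset.sum_subtype (Finset.univ.filter
          (fun v => ¬ v ∈ (Z ∪ nbhd G Z : Set V)))
        (p := fun v => v ∈ ((Z ∪ nbhd G Z)ᶜ : Set V)) (by intro v; simp [Set.mem_compl_iff])]
      refine Finset.sum_congr rfl ?_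
      rintro ⟨u, hu⟩ _
      rw [hmemC u hu]
    have hW' : fvcWeight x' = (∑ u : ((Z ∪ nbhd G Z)ᶜ : Set V), x' (Sum.inl u)) + t := by
      rw [fvcWeight, Fintype.sum_sum_type]
      simp [ht]
    rw [fvcWeight, ← hsplit1, ← hsplit2, hZf, hNf, hsumZ, hsumN, hsumC, hW']
    ring
  have hLP : LPopt G ≤ fvcWeight x := by
    apply csInf_le
    · refine ⟨0, ?_⟩
      rintro w ⟨y, hy, rfl⟩
      exact Finset.sum_nonneg fun v _ => (hy.1 v).1
    · exact ⟨x, hxFVC, rfl⟩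
  linarith
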